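/- arXiv:1209.3326 — 2 statements merged into one kernel-verified Lean document; each statement's English description precedes it below -/
import Mathlib

section
/- Let z₁, …, zₙ ∈ ℂ be distinct points with n ≥ 2, and let m ∈ {1, …, n−1}. Let C, C′ and C″ be the Cauchy matrices associated with (z₁,…,zₙ), (z₁,…,z_m) and (z_{m+1},…,zₙ) respectively, and let 𝟏 denote the all-ones vector of the appropriate dimension. Then ⟨CC*𝟏,𝟏⟩ > ⟨C′C′*𝟏,𝟏⟩ + ⟨C″C″*𝟏,𝟏⟩; equivalently, ‖C*𝟏‖² > ‖C′*𝟏‖² + ‖C″*𝟏‖². -/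
open Complex Filter Metric Set Topology Bornology MeasureTheory

noncomputable section

/-- The Cauchy matrix associated with points `z₁, …, zₙ`:
`c_{jk} = 1/(z_j − z_k)` for `j ≠ k` and `c_{jj} = 0`. -/
def cauchyMatrix {n : ℕ} (z : Fin n → ℂ) : Matrix (Fin n) (Fin n) ℂ :=
  fun j k => if j = k then 0 else 1 / (z j - z k)

/-- The quadratic form `⟨CC*𝟏, 𝟏⟩ = ‖C*𝟏‖²` for the Cauchy matrix `C` of `z₁, …, zₙ`,
where `𝟏 = (1, …, 1)`: the `k`-th entry of `C*𝟏` is `Σ_j conj(c_{jk})`. -/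
def cauchyQuadForm {n : ℕ} (z : Fin n → ℂ) : ℝ :=
  ∑ k : Fin n, ‖∑ j : Fin n, (starRingEnd ℂ) (cauchyMatrix z j k)‖ ^ 2

noncomputable def K (a b : ℂ) : ℂ := if a = b then 0 else (a - b)⁻¹
noncomputable def t3 (k j l : ℂ) : ℝ := ((starRingEnd ℂ) (K j k) * K l k).re
lemma helper (x y : ℂ) :
    ((starRingEnd ℂ) x⁻¹ * y⁻¹).re
      = (x.re*y.re + x.im*y.im)/((x.re*x.re+x.im*x.im)*(y.re*y.re+y.im*y.im)) := by
  rw [map_inv₀, ← mul_inv, Complex.inv_re, Complex.normSq_mul, Complex.mul_re]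
  simp only [Complex.normSq_apply, Complex.conj_re, Complex.conj_im, Complex.normSq_conj]
  ring_nf

lemma corereal (p q r s : ℝ) (hu : 0 < p*p+q*q) (hv : 0 < r*r+s*s)
    (hw : 0 < (r-p)*(r-p)+(s-q)*(s-q)) :
    0 ≤ (p*r+q*s)/((p*p+q*q)*(r*r+s*s))
      + ((-p)*(r-p) + (-q)*(s-q))/(((-p)*(-p)+(-q)*(-q))*((r-p)*(r-p)+(s-q)*(s-q)))
      + ((-r)*(-(r-p)) + (-s)*(-(s-q)))/(((-r)*(-r)+(-s)*(-s))*((-(r-p))*(-(r-p))+(-(s-q))*(-(s-q)))) := by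
  have key : (p*r+q*s)/((p*p+q*q)*(r*r+s*s))
      + ((-p)*(r-p) + (-q)*(s-q))/(((-p)*(-p)+(-q)*(-q))*((r-p)*(r-p)+(s-q)*(s-q)))
      + ((-r)*(-(r-p)) + (-s)*(-(s-q)))/(((-r)*(-r)+(-s)*(-s))*((-(r-p))*(-(r-p))+(-(s-q))*(-(s-q))))
      = 2*(p*s-q*r)^2/((p*p+q*q)*(r*r+s*s)*((r-p)*(r-p)+(s-q)*(s-q))) := by
    rw [show (-p)*(-p)+(-q)*(-q) = p*p+q*q by ring, show (-r)*(-r)+(-s)*(-s) = r*r+s*s by ring,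
      show (-(r-p))*(-(r-p))+(-(s-q))*(-(s-q)) = (r-p)*(r-p)+(s-q)*(s-q) by ring]
    rw [div_add_div _ _ (mul_pos hu hv).ne' (mul_pos hu hw).ne',
      div_add_div _ _ (mul_ne_zero (mul_pos hu hv).ne' (mul_pos hu hw).ne') (mul_pos hv hw).ne',
      div_eq_div_iff (mul_ne_zero (mul_ne_zero (mul_pos hu hv).ne' (mul_pos hu hw).ne') (mul_pos hv hw).ne')
        (mul_pos (mul_pos hu hv) hw).ne']
    ring
  rw [key]
  positivity

lemma sigma_nonneg_distinct (a b c : ℂ) (hab : a ≠ b) (hac : a ≠ c) (hbc : b ≠ c) :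
    0 ≤ t3 a b c + t3 b a c + t3 c a b := by
  have hu : b - a ≠ 0 := sub_ne_zero.2 hab.symm
  have hv : c - a ≠ 0 := sub_ne_zero.2 hac.symm
  have hw : c - b ≠ 0 := sub_ne_zero.2 hbc.symm
  have e1 : a - b = -(b - a) := by ring
  have e2 : a - c = -(c - a) := by ring
  have e3 : c - b = (c - a) - (b - a) := by ring
  have e4 : b - c = -((c - a) - (b - a)) := by ring
  simp only [t3, K, if_neg hab.symm, if_neg hac.symm, if_neg hbc.symm,
    if_neg hab, if_neg hac, if_neg hbc, e1, e2, e3, e4, helper,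
    Complex.neg_re, Complex.neg_im, Complex.sub_re, Complex.sub_im]
  have hu' : 0 < (b-a).re*(b-a).re + (b-a).im*(b-a).im := by
    have := Complex.normSq_pos.2 hu; rwa [Complex.normSq_apply] at this
  have hv' : 0 < (c-a).re*(c-a).re + (c-a).im*(c-a).im := by
    have := Complex.normSq_pos.2 hv; rwa [Complex.normSq_apply] at this
  have hw' : 0 < ((c-a).re-(b-a).re)*((c-a).re-(b-a).re) + ((c-a).im-(b-a).im)*((c-a).im-(b-a).im) := by
    have := Complex.normSq_pos.2 hw; rw [Complex.normSq_apply] at this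
    rw [e3] at this; simpa [Complex.sub_re, Complex.sub_im] using this
  exact corereal (b-a).re (b-a).im (c-a).re (c-a).im hu' hv' hw'

lemma t3_symm (k j l : ℂ) : t3 k j l = t3 k l j := by
  simp only [t3, Complex.mul_re, Complex.conj_re, Complex.conj_im]
  ring

lemma t3_self_nonneg (k j : ℂ) : 0 ≤ t3 k j j := by
  rw [t3, mul_comm, Complex.mul_conj]
  simp [Complex.normSq_nonneg]

lemma t3_self_pos (k j : ℂ) (h : j ≠ k) : 0 < t3 k j j := by
  rw [t3, mul_comm, Complex.mul_conj]
  simp only [Complex.ofReal_re]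
  refine Complex.normSq_pos.2 ?_
  simp [K, if_neg h, sub_ne_zero.2 h]

lemma t3_degenerate1 (x y : ℂ) : t3 x x y = 0 := by simp [t3, K]
lemma t3_degenerate2 (x y : ℂ) : t3 x y x = 0 := by simp [t3, K]

noncomputable def sig (p : ℂ × ℂ × ℂ) : ℝ :=
  t3 p.1 p.2.1 p.2.2 + t3 p.1 p.2.2 p.2.1 + t3 p.2.1 p.1 p.2.2 +
  t3 p.2.1 p.2.2 p.1 + t3 p.2.2 p.1 p.2.1 + t3 p.2.2 p.2.1 p.1

lemma sig_nonneg (p : ℂ × ℂ × ℂ) : 0 ≤ sig p := by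
  obtain ⟨a, b, c⟩ := p
  simp only [sig]
  by_cases hab : a = b
  · subst hab
    simp only [t3_degenerate1, t3_degenerate2]
    nlinarith [t3_self_nonneg c a]
  by_cases hac : a = c
  · subst hac
    simp only [t3_degenerate1, t3_degenerate2]
    nlinarith [t3_self_nonneg b a]
  by_cases hbc : b = c
  · subst hbc
    simp only [t3_degenerate1, t3_degenerate2]
    nlinarith [t3_self_nonneg a b]
  have h := sigma_nonneg_distinct a b c hab hac hbc
  nlinarith [t3_symm a b c, t3_symm b a c, t3_symm c a b]

lemma sig_pos (a b : ℂ) (h : a ≠ b) : 0 < sig (b, a, a) := by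
  simp only [sig, t3_degenerate1, t3_degenerate2]
  nlinarith [t3_self_pos b a h]

lemma sum_perm {α : Type*} (M : Finset α) (π ρ : α → α)
    (hπ : ∀ p ∈ M, π p ∈ M) (hρ : ∀ p ∈ M, ρ p ∈ M)
    (h1 : ∀ p ∈ M, ρ (π p) = p) (h2 : ∀ p ∈ M, π (ρ p) = p) (f : α → ℝ) :
    ∑ p ∈ M, f (π p) = ∑ p ∈ M, f p :=
  Finset.sum_nbij' π ρ hπ hρ h1 h2 (fun _ _ => rfl)

noncomputable def Q (s : Finset ℂ) : ℝ := ∑ p ∈ s ×ˢ s ×ˢ s, t3 p.1 p.2.1 p.2.2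

lemma Q_nested (s : Finset ℂ) : Q s = ∑ k ∈ s, ∑ j ∈ s, ∑ l ∈ s, t3 k j l := by
  rw [Q, Finset.sum_product]
  exact Finset.sum_congr rfl fun k _ => by rw [Finset.sum_product]

lemma Q_union (s t : Finset ℂ) (hd : Disjoint s t) (ha : s.Nonempty) (hb : t.Nonempty) :
    Q s + Q t < Q (s ∪ t) := by
  classical
  set U := s ∪ t with hU
  set M := (U ×ˢ U ×ˢ U) \ ((s ×ˢ s ×ˢ s) ∪ (t ×ˢ t ×ˢ t)) with hM
  have hmem : ∀ x y w : ℂ, (x, y, w) ∈ M ↔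
      ((x ∈ U ∧ y ∈ U ∧ w ∈ U) ∧
        ¬((x ∈ s ∧ y ∈ s ∧ w ∈ s) ∨ (x ∈ t ∧ y ∈ t ∧ w ∈ t))) := by
    intro x y w
    simp [hM, Finset.mem_sdiff, Finset.mem_product, Finset.mem_union]
  have hsub : (s ×ˢ s ×ˢ s) ∪ (t ×ˢ t ×ˢ t) ⊆ U ×ˢ U ×ˢ U := by
    rintro ⟨x, y, w⟩ hp
    simp only [Finset.mem_union, Finset.mem_product] at hp ⊢
    rw [hU]
    simp only [Finset.mem_union]
    tauto
  have hdisj : Disjoint (s ×ˢ s ×ˢ s) (t ×ˢ t ×ˢ t) := by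
    rw [Finset.disjoint_left]
    rintro ⟨x, y, w⟩ hp hp'
    simp only [Finset.mem_product] at hp hp'
    exact (Finset.disjoint_left.1 hd) hp.1 hp'.1
  have key : Q s + Q t + ∑ p ∈ M, t3 p.1 p.2.1 p.2.2 = Q U := by
    rw [Q, Q, Q, ← Finset.sum_union hdisj, add_comm, Finset.sum_sdiff hsub]
  -- permutation closure
  have hclos : ∀ (π : ℂ × ℂ × ℂ → ℂ × ℂ × ℂ),
      (∀ x y w : ℂ, π (x, y, w) = (x, y, w) ∨ π (x, y, w) = (x, w, y) ∨
        π (x, y, w) = (y, x, w) ∨ π (x, y, w) = (y, w, x) ∨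
        π (x, y, w) = (w, x, y) ∨ π (x, y, w) = (w, y, x)) →
      ∀ p ∈ M, π p ∈ M := by
    rintro π hperm ⟨x, y, w⟩ hp
    rw [hmem] at hp
    rcases hperm x y w with h | h | h | h | h | h <;> rw [h, hmem] <;> tauto
  have c1 := hclos (fun p => (p.1, p.2.2, p.2.1)) (fun x y w => by simp)
  have c2 := hclos (fun p => (p.2.1, p.1, p.2.2)) (fun x y w => by simp)
  have c3 := hclos (fun p => (p.2.1, p.2.2, p.1)) (fun x y w => by simp)
  have c4 := hclos (fun p => (p.2.2, p.1, p.2.1)) (fun x y w => by simp)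
  have c5 := hclos (fun p => (p.2.2, p.2.1, p.1)) (fun x y w => by simp)
  have e1 : ∑ p ∈ M, t3 p.1 p.2.2 p.2.1 = ∑ p ∈ M, t3 p.1 p.2.1 p.2.2 :=
    sum_perm M (fun p => (p.1, p.2.2, p.2.1)) (fun p => (p.1, p.2.2, p.2.1)) c1 c1
      (fun _ _ => rfl) (fun _ _ => rfl) (fun p => t3 p.1 p.2.1 p.2.2)
  have e2 : ∑ p ∈ M, t3 p.2.1 p.1 p.2.2 = ∑ p ∈ M, t3 p.1 p.2.1 p.2.2 :=
    sum_perm M (fun p => (p.2.1, p.1, p.2.2)) (fun p => (p.2.1, p.1, p.2.2)) c2 c2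
      (fun _ _ => rfl) (fun _ _ => rfl) (fun p => t3 p.1 p.2.1 p.2.2)
  have e3 : ∑ p ∈ M, t3 p.2.1 p.2.2 p.1 = ∑ p ∈ M, t3 p.1 p.2.1 p.2.2 :=
    sum_perm M (fun p => (p.2.1, p.2.2, p.1)) (fun p => (p.2.2, p.1, p.2.1)) c3 c4
      (fun _ _ => rfl) (fun _ _ => rfl) (fun p => t3 p.1 p.2.1 p.2.2)
  have e4 : ∑ p ∈ M, t3 p.2.2 p.1 p.2.1 = ∑ p ∈ M, t3 p.1 p.2.1 p.2.2 :=
    sum_perm M (fun p => (p.2.2, p.1, p.2.1)) (fun p => (p.2.1, p.2.2, p.1)) c4 c3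
      (fun _ _ => rfl) (fun _ _ => rfl) (fun p => t3 p.1 p.2.1 p.2.2)
  have e5 : ∑ p ∈ M, t3 p.2.2 p.2.1 p.1 = ∑ p ∈ M, t3 p.1 p.2.1 p.2.2 :=
    sum_perm M (fun p => (p.2.2, p.2.1, p.1)) (fun p => (p.2.2, p.2.1, p.1)) c5 c5
      (fun _ _ => rfl) (fun _ _ => rfl) (fun p => t3 p.1 p.2.1 p.2.2)
  have h6 : ∑ p ∈ M, sig p = 6 * ∑ p ∈ M, t3 p.1 p.2.1 p.2.2 := by
    simp only [sig, Finset.sum_add_distrib, e1, e2, e3, e4, e5]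
    ring
  obtain ⟨a, has⟩ := ha
  obtain ⟨b, hbt⟩ := hb
  have hab : a ≠ b := fun h => (Finset.disjoint_left.1 hd) has (h ▸ hbt)
  have hbs : b ∉ s := fun h => (Finset.disjoint_left.1 hd) h hbt
  have hat : a ∉ t := fun h => (Finset.disjoint_left.1 hd) has h
  have hp0 : (b, a, a) ∈ M := by
    rw [hmem, hU]
    simp only [Finset.mem_union]
    tauto
  have hpos : 0 < ∑ p ∈ M, sig p :=
    Finset.sum_pos' (fun p _ => sig_nonneg p) ⟨(b, a, a), hp0, sig_pos a b hab⟩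
  rw [h6] at hpos
  linarith [key]

lemma quad_eq {n : ℕ} (z : Fin n → ℂ) (hz : Function.Injective z) :
    cauchyQuadForm z = Q (Finset.image z Finset.univ) := by
  have hC : ∀ j k, cauchyMatrix z j k = K (z j) (z k) := by
    intro j k
    by_cases h : j = k
    · simp [cauchyMatrix, K, h]
    · simp [cauchyMatrix, K, h, hz.ne h, one_div]
  have step : ∀ k : Fin n, ‖∑ j : Fin n, (starRingEnd ℂ) (cauchyMatrix z j k)‖ ^ 2
      = ∑ j : Fin n, ∑ l : Fin n, t3 (z k) (z j) (z l) := by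
    intro k
    simp only [hC]
    set w := ∑ j : Fin n, (starRingEnd ℂ) (K (z j) (z k)) with hw
    have hconj : (starRingEnd ℂ) w = ∑ l : Fin n, K (z l) (z k) := by
      rw [hw, map_sum]
      simp
    have : ‖w‖ ^ 2 = (w * (starRingEnd ℂ) w).re := by
      rw [Complex.mul_conj]
      simp [Complex.sq_norm]
    rw [this, hconj, hw, Finset.sum_mul_sum]
    rw [Complex.re_sum]
    exact Finset.sum_congr rfl fun j _ => by rw [Complex.re_sum]; rfl
  rw [cauchyQuadForm]
  simp only [step]
  rw [Q_nested, Finset.sum_image (fun x _ y _ h => hz h)]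
  refine Finset.sum_congr rfl fun k _ => ?_
  rw [Finset.sum_image (fun x _ y _ h => hz h)]
  refine Finset.sum_congr rfl fun j _ => ?_
  rw [Finset.sum_image (fun x _ y _ h => hz h)]

/-- For distinct `z₁, …, zₙ` (`n ≥ 2`) and `1 ≤ m ≤ n − 1`, with `C`, `C′`, `C″`
the Cauchy matrices of `(z₁,…,zₙ)`, `(z₁,…,z_m)`, `(z_{m+1},…,zₙ)`:
`⟨CC*𝟏,𝟏⟩ > ⟨C′C′*𝟏,𝟏⟩ + ⟨C″C″*𝟏,𝟏⟩`. -/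
theorem cauchyQuadForm_superadditive (n m : ℕ) (hn : 2 ≤ n) (hm : 1 ≤ m) (hmn : m < n)
    (z : Fin n → ℂ) (hz : Function.Injective z) :
    cauchyQuadForm (fun i : Fin m => z (Fin.castLE hmn.le i)) +
      cauchyQuadForm (fun i : Fin (n - m) => z ⟨m + (i : ℕ), by have := i.isLt; omega⟩) <
      cauchyQuadForm z := by
  classical
  have hz1 : Function.Injective (fun i : Fin m => z (Fin.castLE hmn.le i)) :=
    fun i j h => Fin.castLE_injective hmn.le (hz h)
  have hz2 : Function.Injective
      (fun i : Fin (n - m) => z ⟨m + (i : ℕ), by have := i.isLt; omega⟩) := by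
    intro i j h
    have := hz h
    rw [Fin.mk.injEq] at this
    exact Fin.ext (by omega)
  rw [quad_eq _ hz1, quad_eq _ hz2, quad_eq z hz]
  set A := Finset.image (fun i : Fin m => z (Fin.castLE hmn.le i)) Finset.univ with hA
  set B := Finset.image
    (fun i : Fin (n - m) => z ⟨m + (i : ℕ), by have := i.isLt; omega⟩) Finset.univ with hB
  have hAB : A ∪ B = Finset.image z Finset.univ := by
    ext x
    simp only [hA, hB, Finset.mem_union, Finset.mem_image, Finset.mem_univ, true_and]
    constructor
    · rintro (⟨i, rfl⟩ | ⟨i, rfl⟩) <;> exact ⟨_, rfl⟩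
    · rintro ⟨i, rfl⟩
      by_cases hi : (i : ℕ) < m
      · exact Or.inl ⟨⟨i, hi⟩, by congr 1⟩
      · refine Or.inr ⟨⟨(i : ℕ) - m, by omega⟩, ?_⟩
        congr 1
        exact Fin.ext (by simp; omega)
  have hd : Disjoint A B := by
    rw [Finset.disjoint_left]
    rintro x hx hx'
    simp only [hA, hB, Finset.mem_image, Finset.mem_univ, true_and] at hx hx'
    obtain ⟨i, rfl⟩ := hx
    obtain ⟨j, hj⟩ := hx'
    have := hz hj
    rw [Fin.ext_iff] at this
    simp at this
    omega
  have hAne : A.Nonempty :=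
    ⟨_, Finset.mem_image_of_mem _ (Finset.mem_univ (⟨0, hm⟩ : Fin m))⟩
  have hBne : B.Nonempty :=
    ⟨_, Finset.mem_image_of_mem _ (Finset.mem_univ (⟨0, by omega⟩ : Fin (n - m)))⟩
  rw [← hAB]
  exact Q_union A B hd hAne hBne
end
end

section
/- Let z₁, …, zₙ ∈ ℂ be distinct points and let C be the associated Cauchy matrix. Then ⟨CC*𝟏,𝟏⟩ = Σ_j Σ_{l≠j} 1/|z_j − z_l|² + Σ_{j<k<l} ( 4 S(z_j,z_k,z_l) / (|z_j−z_k| · |z_j−z_l| · |z_k−z_l|) )², where S(z_j,z_k,z_l) denotes the area of the triangle with vertices z_j, z_k, z_l (so the term for a collinear triple is 0). -/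
open Complex Filter Metric Set Topology Bornology MeasureTheory

noncomputable section

/-- The area of the triangle with vertices `a`, `b`, `c` in the plane. -/
def triangleArea (a b c : ℂ) : ℝ := |((b - a) * (starRingEnd ℂ) (c - a)).im| / 2

set_option maxHeartbeats 1000000 in
private lemma realkey (a b c d e f : ℝ)
    (h1 : (a - c) * (a - c) + (b - d) * (b - d) ≠ 0)
    (h2 : (a - e) * (a - e) + (b - f) * (b - f) ≠ 0)
    (h3 : (a - e - (a - c)) * (a - e - (a - c)) + (b - f - (b - d)) * (b - f - (b - d)) ≠ 0) :
    2 * (((a - e) / ((a - e) * (a - e) + -(b - f) * -(b - f)) *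
              ((a - e - (a - c)) / ((a - e - (a - c)) * (a - e - (a - c)) +
                  (b - f - (b - d)) * (b - f - (b - d)))) -
            - -(b - f) / ((a - e) * (a - e) + -(b - f) * -(b - f)) *
              (-(b - f - (b - d)) / ((a - e - (a - c)) * (a - e - (a - c)) +
                  (b - f - (b - d)) * (b - f - (b - d))))) +
          ((a - c) / ((a - c) * (a - c) + -(b - d) * -(b - d)) *
              ((a - c - (a - e)) / ((a - c - (a - e)) * (a - c - (a - e)) +
                  (b - d - (b - f)) * (b - d - (b - f)))) -
            - -(b - d) / ((a - c) * (a - c) + -(b - d) * -(b - d)) *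
              (-(b - d - (b - f)) / ((a - c - (a - e)) * (a - c - (a - e)) +
                  (b - d - (b - f)) * (b - d - (b - f))))) +
        (-(a - c) / (-(a - c) * -(a - c) + - -(b - d) * - -(b - d)) *
            (-(a - e) / (-(a - e) * -(a - e) + -(b - f) * -(b - f))) -
          - - -(b - d) / (-(a - c) * -(a - c) + - -(b - d) * - -(b - d)) *
            (- -(b - f) / (-(a - e) * -(a - e) + -(b - f) * -(b - f))))) =
    4 ^ 2 * ((-(a - c) * - -(b - f) + -(b - d) * -(a - e)) ^ 2 / 2 ^ 2) /
      (((a - c) * (a - c) + (b - d) * (b - d)) * ((a - e) * (a - e) + (b - f) * (b - f)) *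
        ((a - e - (a - c)) * (a - e - (a - c)) + (b - f - (b - d)) * (b - f - (b - d)))) := by
  have e5 : (a - c - (a - e)) * (a - c - (a - e)) + (b - d - (b - f)) * (b - d - (b - f))
      = (a - e - (a - c)) * (a - e - (a - c)) + (b - f - (b - d)) * (b - f - (b - d)) := by ring
  rw [e5]
  simp only [neg_mul_neg, neg_neg]
  set x := a - c with hxd
  set y := b - d with hyd
  set s := a - e with hsd
  set t := b - f with htd
  set P := x * x + y * y with hPd
  set Q := s * s + t * t with hQd
  set R := (s - x) * (s - x) + (t - y) * (t - y) with hRd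
  have hP : P ≠ 0 := h1
  have hQ : Q ≠ 0 := h2
  have hR : R ≠ 0 := h3
  have H : 2*((s*(s-x) - t*(y-t))*P + (x*(x-s) - y*(t-y))*Q + (x*s+y*t)*R)
      = 4*(-(x*t)+y*s)^2 := by rw [hPd, hQd, hRd]; ring
  clear_value x y s t
  clear hxd hyd hsd htd e5
  clear_value P Q R
  field_simp
  linear_combination 4 * H

set_option maxHeartbeats 1000000 in
private lemma key (A B C : ℂ) (hAB : A ≠ B) (hAC : A ≠ C) (hBC : B ≠ C) :
    2 * (((starRingEnd ℂ) (1/(A - C)) * (1/(B - C))).re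
      + ((starRingEnd ℂ) (1/(A - B)) * (1/(C - B))).re
      + ((starRingEnd ℂ) (1/(B - A)) * (1/(C - A))).re)
    = (4 * triangleArea A B C / (‖A - B‖ * ‖A - C‖ * ‖B - C‖)) ^ 2 := by
  have e1 : B - A = -(A - B) := by ring
  have e2 : C - A = -(A - C) := by ring
  have e3 : C - B = (A - B) - (A - C) := by ring
  have e4 : B - C = (A - C) - (A - B) := by ring
  have h1 : Complex.normSq (A - B) ≠ 0 := by
    rw [ne_eq, Complex.normSq_eq_zero]; exact sub_ne_zero.2 hAB
  have h2 : Complex.normSq (A - C) ≠ 0 := by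
    rw [ne_eq, Complex.normSq_eq_zero]; exact sub_ne_zero.2 hAC
  have h3 : Complex.normSq (A - C - (A - B)) ≠ 0 := by
    rw [ne_eq, Complex.normSq_eq_zero]
    intro h; exact hBC (by linear_combination h)
  rw [triangleArea, e1, e2, e3, e4]
  rw [div_pow, mul_pow, mul_pow, mul_pow,
    Complex.sq_norm, Complex.sq_norm, Complex.sq_norm]
  rw [div_pow, _root_.sq_abs]
  simp only [one_div, map_inv₀, Complex.mul_re, Complex.mul_im, Complex.inv_re, Complex.inv_im,
    Complex.conj_re, Complex.conj_im, Complex.normSq_conj, Complex.normSq_apply,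
    Complex.neg_re, Complex.neg_im, Complex.sub_re, Complex.sub_im,
    Complex.normSq_neg] at h1 h2 h3 ⊢
  exact realkey A.re A.im B.re B.im C.re C.im h1 h2 h3

private lemma sum3_swap12 {n : ℕ} (g : Fin n → Fin n → Fin n → ℝ) :
    ∑ a : Fin n, ∑ b : Fin n, ∑ c : Fin n, g a b c
      = ∑ a : Fin n, ∑ b : Fin n, ∑ c : Fin n, g b a c := Finset.sum_comm

private lemma sum3_swap23 {n : ℕ} (g : Fin n → Fin n → Fin n → ℝ) :
    ∑ a : Fin n, ∑ b : Fin n, ∑ c : Fin n, g a b c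
      = ∑ a : Fin n, ∑ b : Fin n, ∑ c : Fin n, g a c b :=
  Finset.sum_congr rfl fun _ _ => Finset.sum_comm

private lemma sum3_perm {n : ℕ} (f : Fin n → Fin n → Fin n → ℝ)
    (hf : ∀ x y w, x = y ∨ x = w ∨ y = w → f x y w = 0) :
    (∑ a : Fin n, ∑ b : Fin n, ∑ c : Fin n,
      if a < b ∧ b < c then f a b c + f a c b + f b a c + f b c a + f c a b + f c b a else 0)
    = ∑ x : Fin n, ∑ y : Fin n, ∑ w : Fin n, f x y w := by
  have esplit : ∀ a b c : Fin n,
      (if a < b ∧ b < c then f a b c + f a c b + f b a c + f b c a + f c a b + f c b a else 0)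
      = (if a < b ∧ b < c then f a b c else 0) + (if a < b ∧ b < c then f a c b else 0)
        + (if a < b ∧ b < c then f b a c else 0) + (if a < b ∧ b < c then f b c a else 0)
        + (if a < b ∧ b < c then f c a b else 0) + (if a < b ∧ b < c then f c b a else 0) := by
    intro a b c; split <;> simp
  simp only [esplit, Finset.sum_add_distrib]
  have E2 : (∑ a : Fin n, ∑ b : Fin n, ∑ c : Fin n, if a < b ∧ b < c then f a c b else 0)
      = ∑ a : Fin n, ∑ b : Fin n, ∑ c : Fin n, if a < c ∧ c < b then f a b c else 0 :=
    sum3_swap23 (fun a b c => if a < b ∧ b < c then f a c b else 0)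
  have E3 : (∑ a : Fin n, ∑ b : Fin n, ∑ c : Fin n, if a < b ∧ b < c then f b a c else 0)
      = ∑ a : Fin n, ∑ b : Fin n, ∑ c : Fin n, if b < a ∧ a < c then f a b c else 0 :=
    sum3_swap12 (fun a b c => if a < b ∧ b < c then f b a c else 0)
  have E4 : (∑ a : Fin n, ∑ b : Fin n, ∑ c : Fin n, if a < b ∧ b < c then f b c a else 0)
      = ∑ a : Fin n, ∑ b : Fin n, ∑ c : Fin n, if c < a ∧ a < b then f a b c else 0 :=
    (sum3_swap12 (fun a b c => if a < b ∧ b < c then f b c a else 0)).trans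
      (sum3_swap23 (fun a b c => if b < a ∧ a < c then f a c b else 0))
  have E5 : (∑ a : Fin n, ∑ b : Fin n, ∑ c : Fin n, if a < b ∧ b < c then f c a b else 0)
      = ∑ a : Fin n, ∑ b : Fin n, ∑ c : Fin n, if b < c ∧ c < a then f a b c else 0 :=
    (sum3_swap23 (fun a b c => if a < b ∧ b < c then f c a b else 0)).trans
      (sum3_swap12 (fun a b c => if a < c ∧ c < b then f b a c else 0))
  have E6 : (∑ a : Fin n, ∑ b : Fin n, ∑ c : Fin n, if a < b ∧ b < c then f c b a else 0)
      = ∑ a : Fin n, ∑ b : Fin n, ∑ c : Fin n, if c < b ∧ b < a then f a b c else 0 :=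
    ((sum3_swap12 (fun a b c => if a < b ∧ b < c then f c b a else 0)).trans
      (sum3_swap23 (fun a b c => if b < a ∧ a < c then f c a b else 0))).trans
      (sum3_swap12 (fun a b c => if c < a ∧ a < b then f b a c else 0))
  rw [E2, E3, E4, E5, E6]
  simp only [← Finset.sum_add_distrib]
  refine Finset.sum_congr rfl fun a _ => Finset.sum_congr rfl fun b _ =>
    Finset.sum_congr rfl fun c _ => ?_
  rcases eq_or_ne a b with hab | hab
  · rw [hf a b c (Or.inl hab)]; split_ifs <;> first | norm_num | (exfalso; omega)
  rcases eq_or_ne a c with hac | hac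
  · rw [hf a b c (Or.inr (Or.inl hac))]; split_ifs <;> first | norm_num | (exfalso; omega)
  rcases eq_or_ne b c with hbc | hbc
  · rw [hf a b c (Or.inr (Or.inr hbc))]; split_ifs <;> first | norm_num | (exfalso; omega)
  · split_ifs <;> first | ring1 | (exfalso; omega)

/-- For distinct points `z₁, …, zₙ` with Cauchy matrix `C`:
`⟨CC*𝟏,𝟏⟩ = Σ_j Σ_{l≠j} 1/|z_j−z_l|² +
Σ_{j<k<l} (4 S(z_j,z_k,z_l)/(|z_j−z_k||z_j−z_l||z_k−z_l|))²`. -/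
theorem cauchyQuadForm_formula (n : ℕ) (z : Fin n → ℂ) (hz : Function.Injective z) :
    cauchyQuadForm z =
      (∑ j : Fin n, ∑ l ∈ Finset.univ.filter (fun l : Fin n => l ≠ j),
        1 / ‖z j - z l‖ ^ 2) +
      ∑ j : Fin n, ∑ k : Fin n, ∑ l : Fin n,
        if j < k ∧ k < l then
          (4 * triangleArea (z j) (z k) (z l) /
            (‖z j - z k‖ * ‖z j - z l‖ * ‖z k - z l‖)) ^ 2
        else 0 := by
  classical
  set F := cauchyMatrix z with hF
  set E : Fin n → Fin n → Fin n → ℝ :=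
    fun x y k => ((starRingEnd ℂ) (F x k) * F y k).re with hE
  have hw : ∀ w : ℂ, ‖w‖ ^ 2 = (w * (starRingEnd ℂ) w).re := by
    intro w
    rw [Complex.mul_conj, Complex.ofReal_re, Complex.sq_norm]
  -- Step 1: expand the quadratic form into a triple sum
  have step1 : cauchyQuadForm z = ∑ k : Fin n, ∑ x : Fin n, ∑ y : Fin n, E x y k := by
    unfold cauchyQuadForm
    refine Finset.sum_congr rfl fun k _ => ?_
    rw [hw, map_sum]
    simp only [Complex.conj_conj]
    rw [Finset.sum_mul_sum]
    simp only [Complex.re_sum, hE, hF]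
  rw [step1, Finset.sum_comm]
  have step2 : ∀ x : Fin n, (∑ k : Fin n, ∑ y : Fin n, E x y k)
      = ∑ y : Fin n, ∑ k : Fin n, E x y k := fun _ => Finset.sum_comm
  simp only [step2]
  -- Split diagonal (x = y) from off-diagonal
  have hsplit : ∀ x y k : Fin n, E x y k
      = (if x = y then E x y k else 0) + (if x = y then 0 else E x y k) := by
    intro x y k; by_cases h : x = y <;> simp [h]
  have step3 : (∑ x : Fin n, ∑ y : Fin n, ∑ k : Fin n, E x y k)
      = (∑ x : Fin n, ∑ y : Fin n, ∑ k : Fin n, if x = y then E x y k else 0)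
        + (∑ x : Fin n, ∑ y : Fin n, ∑ k : Fin n, if x = y then 0 else E x y k) := by
    rw [← Finset.sum_add_distrib]
    refine Finset.sum_congr rfl fun x _ => ?_
    rw [← Finset.sum_add_distrib]
    refine Finset.sum_congr rfl fun y _ => ?_
    rw [← Finset.sum_add_distrib]
    exact Finset.sum_congr rfl fun k _ => hsplit x y k
  rw [step3]
  congr 1
  -- Diagonal part
  · have pull : ∀ x : Fin n,
        (∑ y : Fin n, ∑ k : Fin n, if x = y then E x y k else 0) = ∑ k : Fin n, E x x k := by
      intro x
      have inner : ∀ y : Fin n, (∑ k : Fin n, if x = y then E x y k else 0)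
          = if x = y then ∑ k : Fin n, E x y k else 0 := by
        intro y; split <;> simp
      simp only [inner]
      rw [Finset.sum_ite_eq]
      simp
    simp only [pull]
    refine Finset.sum_congr rfl fun x _ => ?_
    rw [Finset.sum_filter]
    refine Finset.sum_congr rfl fun k _ => ?_
    by_cases h : x = k
    · subst h; simp [hE, hF, cauchyMatrix]
    · have hk : k ≠ x := fun h' => h h'.symm
      rw [if_pos hk]
      have hzk : z x - z k ≠ 0 := sub_ne_zero.2 (fun h' => h (hz h'))
      simp only [hE, hF, cauchyMatrix, if_neg h, one_div]
      rw [mul_comm, Complex.mul_conj, Complex.ofReal_re, map_inv₀, Complex.normSq_eq_norm_sq,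
        inv_eq_one_div]
  -- Off-diagonal part
  · have hvan : ∀ x y w : Fin n, x = y ∨ x = w ∨ y = w →
        (if x = y then 0 else E x y w) = 0 := by
      intro x y w h
      rcases h with h | h | h
      · simp [h]
      · subst h
        simp [hE, hF, cauchyMatrix]
      · subst h
        simp [hE, hF, cauchyMatrix]
    rw [← sum3_perm (fun x y w => if x = y then 0 else E x y w) hvan]
    refine Finset.sum_congr rfl fun a _ => Finset.sum_congr rfl fun b _ =>
      Finset.sum_congr rfl fun c _ => ?_
    by_cases h : a < b ∧ b < c
    · rw [if_pos h, if_pos h]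
      have hab : a ≠ b := ne_of_lt h.1
      have hbc : b ≠ c := ne_of_lt h.2
      have hac : a ≠ c := ne_of_lt (lt_trans h.1 h.2)
      rw [if_neg hab, if_neg hac, if_neg (fun hh : b = a => hab hh.symm),
        if_neg hbc, if_neg (fun hh : c = a => hac hh.symm),
        if_neg (fun hh : c = b => hbc hh.symm)]
      have Esymm : ∀ x y k : Fin n, E x y k = E y x k := by
        intro x y k
        simp only [hE, Complex.mul_re, Complex.conj_re, Complex.conj_im]
        ring
      have hzab : z a ≠ z b := fun h' => hab (hz h')
      have hzac : z a ≠ z c := fun h' => hac (hz h')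
      have hzbc : z b ≠ z c := fun h' => hbc (hz h')
      have hkey := key (z a) (z b) (z c) hzab hzac hzbc
      have eabc : E a b c = ((starRingEnd ℂ) (1/(z a - z c)) * (1/(z b - z c))).re := by
        simp only [hE, hF, cauchyMatrix, if_neg hac, if_neg hbc]
      have eacb : E a c b = ((starRingEnd ℂ) (1/(z a - z b)) * (1/(z c - z b))).re := by
        simp only [hE, hF, cauchyMatrix, if_neg hab,
          if_neg (fun hh : c = b => hbc hh.symm)]
      have ebca : E b c a = ((starRingEnd ℂ) (1/(z b - z a)) * (1/(z c - z a))).re := by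
        simp only [hE, hF, cauchyMatrix, if_neg (fun hh : b = a => hab hh.symm),
          if_neg (fun hh : c = a => hac hh.symm)]
      rw [Esymm b a c, Esymm c a b, Esymm c b a, eabc, eacb, ebca]
      rw [← hkey]
      ring
    · rw [if_neg h, if_neg h]
end
end
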